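/- (Propagated mixing-time estimate.) Let (E, ℰ, μ, (κ_t), x) be as in the framework with spectral gap λ > 0, the process started at the point x. Then for every ε ∈ (0,1) and every t > 0 such that the law ν_t = κ_t(x,·) has density f_t with respect to μ with finite entropy Ent(X_t) = ∫ f_t log f_t dμ, we have t_mix(ε) ≤ t + (1 + Ent(X_t)) / (λ ε). -/

import Mathlib

open MeasureTheory ProbabilityTheory Filter Topology
open scoped ENNReal

noncomputable section

variable {E : Type*} [MeasurableSpace E]

/-- Total variation distance between two measures: `sup_{A ∈ ℰ} |ν(A) − μ(A)|`. -/
def tvDist (ν μ : Measure E) : ℝ :=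
  ⨆ A : {A : Set E // MeasurableSet A}, |(ν A.1).toReal - (μ A.1).toReal|

/-- The Markov operator `P_t f := ∫ f(y) κ_t(·, dy)`. -/
def Pop (κ : ℝ → Kernel E E) (t : ℝ) (f : E → ℝ) : E → ℝ :=
  fun x => ∫ y, f y ∂(κ t x)

/-- The framework: a measurable semigroup `(κ_t)_{t ≥ 0}` of Markov kernels on `E`
(`κ_0(x, ·) = δ_x` and `κ_{s+t}(x, A) = ∫ κ_t(y, A) κ_s(x, dy)`), reversible with
respect to the probability measure `μ`. -/
structure Framework (E : Type*) [MeasurableSpace E] where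
  μ : Measure E
  isProb : IsProbabilityMeasure μ
  κ : ℝ → Kernel E E
  isMarkov : ∀ t : ℝ, IsMarkovKernel (κ t)
  κ_zero : ∀ x : E, (κ 0) x = Measure.dirac x
  semigroup : ∀ s t : ℝ, 0 ≤ s → 0 ≤ t → κ (s + t) = (κ t).comp (κ s)
  reversible : ∀ t : ℝ, 0 ≤ t → ∀ A B : Set E, MeasurableSet A → MeasurableSet B →
    ∫ x in A, ((κ t) x B).toReal ∂μ = ∫ x in B, ((κ t) x A).toReal ∂μ

/-- The semigroup has spectral gap `lam`: for every `f ∈ L²(μ)` with `∫ f dμ = 0` and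
every `t ≥ 0`, `‖P_t f‖₂ ≤ e^{-lam t} ‖f‖₂`. -/
def HasSpectralGap (F : Framework E) (lam : ℝ) : Prop :=
  ∀ f : E → ℝ, MemLp f 2 F.μ → ∫ x, f x ∂F.μ = 0 → ∀ t : ℝ, 0 ≤ t →
    eLpNorm (Pop F.κ t f) 2 F.μ ≤ ENNReal.ofReal (Real.exp (-lam * t)) * eLpNorm f 2 F.μ

/-- Mixing time of the process started at `x`: `inf {t > 0 : TV(X_t) ≤ ε}` (`∞` if the
set is empty). -/
def tmix (F : Framework E) (x : E) (ε : ℝ) : ℝ≥0∞ :=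
  ⨅ (t : ℝ) (_ : 0 < t ∧ tvDist ((F.κ t) x) F.μ ≤ ε), ENNReal.ofReal t


lemma xlogx_ge (x : ℝ) (hx : 0 ≤ x) : -(Real.exp 1)⁻¹ ≤ x * Real.log x := by
  rcases hx.eq_or_lt with h | h
  · simp [← h]
    positivity
  · have hy : -Real.log x ≤ Real.exp (-Real.log x - 1) := by
      have := Real.add_one_le_exp (-Real.log x - 1); linarith
    have h2 : -Real.log x * x ≤ Real.exp (-Real.log x - 1) * x :=
      mul_le_mul_of_nonneg_right hy h.le
    have h3 : Real.exp (-Real.log x - 1) * x = (Real.exp 1)⁻¹ := by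
      rw [Real.exp_sub, Real.exp_neg, Real.exp_log h]
      field_simp
    nlinarith

lemma xlogx_mono {x y : ℝ} (hx : 1 ≤ x) (hxy : x ≤ y) : x * Real.log x ≤ y * Real.log y := by
  have h1 : Real.log x ≤ Real.log y := Real.log_le_log (by linarith) hxy
  have h2 : 0 ≤ Real.log x := Real.log_nonneg hx
  nlinarith

lemma xlogx_pos_gt_one {x : ℝ} (hx : 0 ≤ x) (h : 0 < x * Real.log x) : 1 < x := by
  by_contra hc
  push_neg at hc
  have : Real.log x ≤ 0 := Real.log_nonpos hx hc
  nlinarith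

lemma xlogx_gap {x y : ℝ} (hx : 0 ≤ x) (hxy : x ≤ y) (hy : 1 ≤ y) :
    y * Real.log y - x * Real.log x ≤ (y - x) * (1 + Real.log y) := by
  rcases hx.eq_or_lt with h | h
  · have h2 : 0 ≤ Real.log y := Real.log_nonneg hy
    rw [← h]; nlinarith
  · have h1 : Real.log y - Real.log x = Real.log (y / x) := (Real.log_div (by linarith) (ne_of_gt h)).symm
    have h2 : Real.log (y / x) ≤ y / x - 1 := Real.log_le_sub_one_of_pos (by positivity)
    have h3 : x * (y / x) = y := by field_simp
    nlinarith [mul_le_mul_of_nonneg_left h2 hx]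

lemma log_le_div_e {y : ℝ} (hy : 0 < y) : Real.log y ≤ y / Real.exp 1 := by
  have h := Real.log_le_sub_one_of_pos (show 0 < y / Real.exp 1 by positivity)
  rw [Real.log_div (ne_of_gt hy) (ne_of_gt (Real.exp_pos 1)), Real.log_exp] at h
  linarith

namespace Framework
variable (F : Framework E)

lemma lint_fin {s : ℝ} {A B : Set E} : ∫⁻ x in A, F.κ s x B ∂F.μ ≠ ⊤ := by
  haveI := F.isProb
  haveI := F.isMarkov s
  refine ne_of_lt (lt_of_le_of_lt ?_ ENNReal.one_lt_top)
  calc ∫⁻ x in A, F.κ s x B ∂F.μ ≤ ∫⁻ _ in A, 1 ∂F.μ := lintegral_mono fun x => prob_le_one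
    _ = F.μ A := by simp
    _ ≤ 1 := prob_le_one

/-- Reversibility in lintegral form. -/
lemma lrev {s : ℝ} (hs : 0 ≤ s) {A B : Set E} (hA : MeasurableSet A) (hB : MeasurableSet B) :
    ∫⁻ x in A, F.κ s x B ∂F.μ = ∫⁻ x in B, F.κ s x A ∂F.μ := by
  haveI := F.isProb
  haveI := F.isMarkov s
  have h1 : ∀ (C : Set E) {D : Set E}, MeasurableSet D →
      ∫ x in C, (F.κ s x D).toReal ∂F.μ = (∫⁻ x in C, F.κ s x D ∂F.μ).toReal := by
    intro C D hD
    exact integral_toReal ((Kernel.measurable_coe _ hD).aemeasurable)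
      (ae_of_all _ fun x => measure_lt_top _ _)
  have h2 := F.reversible s hs A B hA hB
  rw [h1 A hB, h1 B hA] at h2
  exact (ENNReal.toReal_eq_toReal_iff' (F.lint_fin) (F.lint_fin)).mp h2

/-- Invariance in lintegral form. -/
lemma linv {s : ℝ} (hs : 0 ≤ s) {A : Set E} (hA : MeasurableSet A) :
    ∫⁻ y, F.κ s y A ∂F.μ = F.μ A := by
  haveI := F.isProb
  haveI := F.isMarkov s
  have := F.lrev hs MeasurableSet.univ hA
  simp only [Measure.restrict_univ, measure_univ] at this
  rw [this]
  simp

/-- Self-adjointness in lintegral form. -/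
lemma lself {s : ℝ} (hs : 0 ≤ s) {A : Set E} (hA : MeasurableSet A)
    {w : E → ℝ≥0∞} (hw : Measurable w) :
    ∫⁻ y, w y * F.κ s y A ∂F.μ = ∫⁻ x in A, (∫⁻ y, w y ∂F.κ s x) ∂F.μ := by
  haveI := F.isProb
  haveI := F.isMarkov s
  refine Measurable.ennreal_induction
    (motive := fun w => ∫⁻ y, w y * F.κ s y A ∂F.μ = ∫⁻ x in A, (∫⁻ y, w y ∂F.κ s x) ∂F.μ)
    ?_ ?_ ?_ hw
  · intro c B hB
    have hl : ∀ y, B.indicator (fun _ => c) y * F.κ s y A =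
        B.indicator (fun y => c * F.κ s y A) y := by
      intro y
      by_cases hy : y ∈ B <;> simp [Set.indicator_apply, hy]
    simp_rw [hl]
    rw [lintegral_indicator hB, lintegral_const_mul c (Kernel.measurable_coe _ hA),
      F.lrev hs hB hA]
    have hr : ∀ x, ∫⁻ y, B.indicator (fun _ => c) y ∂F.κ s x = c * F.κ s x B := by
      intro x
      rw [lintegral_indicator_const hB]
    simp_rw [hr]
    rw [lintegral_const_mul c (Kernel.measurable_coe _ hB)]
  · intro w₁ w₂ hdisj hw₁ hw₂ ih₁ ih₂
    have hl : ∫⁻ y, (w₁ + w₂) y * F.κ s y A ∂F.μ =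
        (∫⁻ y, w₁ y * F.κ s y A ∂F.μ) + ∫⁻ y, w₂ y * F.κ s y A ∂F.μ := by
      simp_rw [Pi.add_apply, add_mul]
      exact lintegral_add_left (hw₁.mul (Kernel.measurable_coe _ hA)) _
    have hΦ : ∀ (w : E → ℝ≥0∞), Measurable w →
        Measurable fun x => ∫⁻ y, w y ∂F.κ s x := by
      intro w hw
      exact Measurable.lintegral_kernel_prod_right' (hw.comp measurable_snd)
    have hr : ∀ x, ∫⁻ y, (w₁ + w₂) y ∂F.κ s x =
        (∫⁻ y, w₁ y ∂F.κ s x) + ∫⁻ y, w₂ y ∂F.κ s x := by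
      intro x
      simp_rw [Pi.add_apply]
      exact lintegral_add_left hw₁ _
    rw [hl, ih₁, ih₂]
    simp_rw [hr]
    rw [lintegral_add_left (hΦ w₁ hw₁)]
  · intro w hw hmono ih
    have hΦ : ∀ n, Measurable fun x => ∫⁻ y, w n y ∂F.κ s x := fun n =>
      Measurable.lintegral_kernel_prod_right' ((hw n).comp measurable_snd)
    have hl : ∫⁻ y, (⨆ n, w n y) * F.κ s y A ∂F.μ =
        ⨆ n, ∫⁻ y, w n y * F.κ s y A ∂F.μ := by
      simp_rw [ENNReal.iSup_mul]
      exact lintegral_iSup (fun n => (hw n).mul (Kernel.measurable_coe _ hA))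
        (fun i j hij y => mul_le_mul_left (hmono hij y) _)
    have hr : ∫⁻ x in A, (∫⁻ y, ⨆ n, w n y ∂F.κ s x) ∂F.μ =
        ⨆ n, ∫⁻ x in A, (∫⁻ y, w n y ∂F.κ s x) ∂F.μ := by
      have hin : ∀ x, ∫⁻ y, ⨆ n, w n y ∂F.κ s x = ⨆ n, ∫⁻ y, w n y ∂F.κ s x := by
        intro x
        exact lintegral_iSup hw (fun i j hij y => hmono hij y)
      simp_rw [hin]
      exact lintegral_iSup (fun n => hΦ n)
        (fun i j hij x => lintegral_mono fun y => hmono hij y)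
    rw [hl, hr]
    exact iSup_congr ih

end Framework

namespace Framework
variable (F : Framework E)

lemma Pop_nonneg_rep {s : ℝ} {G : E → ℝ} (hG : Measurable G) (hG0 : ∀ y, 0 ≤ G y) :
    ∀ x : E, Pop F.κ s G x = (∫⁻ y, ENNReal.ofReal (G y) ∂F.κ s x).toReal := fun x =>
  integral_eq_lintegral_of_nonneg_ae (ae_of_all _ hG0) hG.aestronglyMeasurable

lemma Pop_nonneg_measurable {s : ℝ} {G : E → ℝ} (hG : Measurable G) (hG0 : ∀ y, 0 ≤ G y) :
    Measurable (Pop F.κ s G) := by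
  haveI := F.isMarkov s
  have hrep := F.Pop_nonneg_rep (s := s) hG hG0
  have : Pop F.κ s G = fun x => (∫⁻ y, ENNReal.ofReal (G y) ∂F.κ s x).toReal := funext hrep
  rw [this]
  exact (Measurable.lintegral_kernel_prod_right'
    (hG.ennreal_ofReal.comp measurable_snd)).ennreal_toReal

lemma Pop_bounds {s : ℝ} {G : E → ℝ} (hG : Measurable G) (hG0 : ∀ y, 0 ≤ G y) {C : ℝ}
    (hGC : ∀ y, G y ≤ C) : ∀ x, 0 ≤ Pop F.κ s G x ∧ Pop F.κ s G x ≤ C := by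
  haveI := F.isMarkov s
  intro x
  have hInt : Integrable G (F.κ s x) := by
    refine Integrable.mono' (integrable_const C) hG.aestronglyMeasurable (ae_of_all _ fun y => ?_)
    rw [Real.norm_eq_abs, abs_of_nonneg (hG0 y)]; exact hGC y
  refine ⟨integral_nonneg hG0, ?_⟩
  calc Pop F.κ s G x = ∫ y, G y ∂F.κ s x := rfl
    _ ≤ ∫ _, C ∂F.κ s x := integral_mono hInt (integrable_const C) hGC
    _ = C := by simp

/-- Self-adjointness for nonnegative bounded measurable functions, Bochner form. -/
lemma rself {s : ℝ} (hs : 0 ≤ s) {A : Set E} (hA : MeasurableSet A)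
    {G : E → ℝ} (hG : Measurable G) (hG0 : ∀ y, 0 ≤ G y) {C : ℝ} (hGC : ∀ y, G y ≤ C) :
    ∫ y, G y * (F.κ s y A).toReal ∂F.μ = ∫ x in A, Pop F.κ s G x ∂F.μ := by
  haveI := F.isProb
  haveI := F.isMarkov s
  set w : E → ℝ≥0∞ := fun y => ENNReal.ofReal (G y) with hw
  have hwm : Measurable w := hG.ennreal_ofReal
  have lhs : ∫ y, G y * (F.κ s y A).toReal ∂F.μ = (∫⁻ y, w y * F.κ s y A ∂F.μ).toReal := by
    rw [integral_eq_lintegral_of_nonneg_ae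
      (ae_of_all _ fun y => mul_nonneg (hG0 y) ENNReal.toReal_nonneg)
      ((hG.mul ((Kernel.measurable_coe _ hA).ennreal_toReal)).aestronglyMeasurable)]
    congr 1
    refine lintegral_congr fun y => ?_
    rw [ENNReal.ofReal_mul (hG0 y), ENNReal.ofReal_toReal (measure_ne_top _ _)]
  have hΦm : Measurable fun x => ∫⁻ y, w y ∂F.κ s x :=
    Measurable.lintegral_kernel_prod_right' (hwm.comp measurable_snd)
  have hΦfin : ∀ x, (∫⁻ y, w y ∂F.κ s x) ≤ ENNReal.ofReal C := by
    intro x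
    calc ∫⁻ y, w y ∂F.κ s x ≤ ∫⁻ _, ENNReal.ofReal C ∂F.κ s x :=
        lintegral_mono fun y => ENNReal.ofReal_le_ofReal (hGC y)
      _ = ENNReal.ofReal C := by simp
  have rhs : ∫ x in A, Pop F.κ s G x ∂F.μ = (∫⁻ x in A, (∫⁻ y, w y ∂F.κ s x) ∂F.μ).toReal := by
    have hrep := F.Pop_nonneg_rep (s := s) hG hG0
    calc ∫ x in A, Pop F.κ s G x ∂F.μ = ∫ x in A, (∫⁻ y, w y ∂F.κ s x).toReal ∂F.μ :=
          integral_congr_ae (ae_of_all _ fun x => hrep x)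
      _ = (∫⁻ x in A, (∫⁻ y, w y ∂F.κ s x) ∂F.μ).toReal :=
          integral_toReal hΦm.aemeasurable
            (ae_of_all _ fun x => lt_of_le_of_lt (hΦfin x) ENNReal.ofReal_lt_top)
  rw [lhs, rhs, F.lself hs hA hwm]

/-- Invariance, Bochner form. -/
lemma rinv {s : ℝ} (hs : 0 ≤ s) {A : Set E} (hA : MeasurableSet A) :
    ∫ y, (F.κ s y A).toReal ∂F.μ = (F.μ A).toReal := by
  haveI := F.isProb
  haveI := F.isMarkov s
  rw [integral_toReal ((Kernel.measurable_coe _ hA).aemeasurable)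
    (ae_of_all _ fun x => measure_lt_top _ _), F.linv hs hA]

end Framework

/-- From a (possibly non-measurable) density `f` with integrable `f log f`, produce a
measurable density `m` whose positive-part entropy is controlled by `∫ f log f + 1/e`. -/
lemma density_entropy_bound {μ ν : Measure E} [IsProbabilityMeasure μ] [IsProbabilityMeasure ν]
    (f : E → ℝ) (hf0 : ∀ a, 0 ≤ f a)
    (hdens : ν = μ.withDensity fun a => ENNReal.ofReal (f a))
    (hint : Integrable (fun a => f a * Real.log (f a)) μ) :
    ∃ m : E → ℝ, Measurable m ∧ (∀ a, 0 ≤ m a) ∧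
      ν = μ.withDensity (fun a => ENNReal.ofReal (m a)) ∧
      Integrable m μ ∧ ∫ a, m a ∂μ = 1 ∧
      Integrable (fun a => max (m a * Real.log (m a)) 0) μ ∧
      ∫ a, max (m a * Real.log (m a)) 0 ∂μ ≤ (∫ a, f a * Real.log (f a) ∂μ) + (Real.exp 1)⁻¹ := by
  have hac : ν ≪ μ := by rw [hdens]; exact withDensity_absolutelyContinuous μ _
  set ρ : E → ENNReal := ν.rnDeriv μ with hρ
  have hρm : Measurable ρ := Measure.measurable_rnDeriv ν μ
  have hνρ : μ.withDensity ρ = ν := Measure.withDensity_rnDeriv_eq ν μ hac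
  have hρfin : ∀ᵐ a ∂μ, ρ a < ⊤ := Measure.rnDeriv_lt_top ν μ
  set m : E → ℝ := fun a => (ρ a).toReal with hm
  have hmm : Measurable m := hρm.ennreal_toReal
  have hm0 : ∀ a, 0 ≤ m a := fun a => ENNReal.toReal_nonneg
  have hρae : (fun a => ENNReal.ofReal (m a)) =ᵐ[μ] ρ := by
    filter_upwards [hρfin] with a ha
    exact ENNReal.ofReal_toReal ha.ne
  have hνm : ν = μ.withDensity (fun a => ENNReal.ofReal (m a)) := by
    rw [← hνρ]
    exact (withDensity_congr_ae hρae).symm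
  -- total mass
  have hmass : ∫⁻ a, ENNReal.ofReal (m a) ∂μ = 1 := by
    have : μ.withDensity (fun a => ENNReal.ofReal (m a)) Set.univ = 1 := by
      rw [← hνm]; exact measure_univ
    rwa [withDensity_apply _ MeasurableSet.univ, Measure.restrict_univ] at this
  have hm_int : Integrable m μ := by
    refine integrable_toReal_of_lintegral_ne_top hρm.aemeasurable ?_
    have : ∫⁻ a, ρ a ∂μ = 1 := by
      rw [← lintegral_congr_ae hρae, hmass]
    simp [this]
  have hm1 : ∫ a, m a ∂μ = 1 := by
    rw [hm, integral_toReal hρm.aemeasurable hρfin, lintegral_congr_ae hρae.symm, hmass]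
    rfl
  -- lintegrals of f and m agree on measurable sets
  have hfsets : ∀ s : Set E, MeasurableSet s →
      ∫⁻ a in s, ENNReal.ofReal (f a) ∂μ = ∫⁻ a in s, ENNReal.ofReal (m a) ∂μ := by
    intro s hs
    rw [← withDensity_apply _ hs, ← withDensity_apply _ hs, ← hdens, ← hνm]
  -- the measurable a.e.-version of f log f
  set γ : E → ℝ := hint.1.mk _ with hγdef
  have hγm : StronglyMeasurable γ := hint.1.stronglyMeasurable_mk
  have hγae : (fun a => f a * Real.log (f a)) =ᵐ[μ] γ := hint.1.ae_eq_mk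
  have hγint : Integrable γ μ := hint.congr hγae
  -- key a.e. inequality
  have hkey : ∀ᵐ a ∂μ, max (m a * Real.log (m a)) 0 ≤ γ a + (Real.exp 1)⁻¹ := by
    rw [ae_iff]
    by_contra hD
    -- D: bad set
    set φm : E → ℝ := fun a => max (m a * Real.log (m a)) 0 with hφm
    have hφmm : Measurable φm := (hmm.mul (Real.measurable_log.comp hmm)).max measurable_const
    have hsub : {a | ¬ φm a ≤ γ a + (Real.exp 1)⁻¹} ⊆
        ⋃ k : ℕ, {a | γ a + (Real.exp 1)⁻¹ + ((k : ℝ) + 1)⁻¹ ≤ φm a} := by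
      intro a ha
      simp only [Set.mem_setOf_eq, not_le] at ha
      obtain ⟨k, hk⟩ := exists_nat_one_div_lt (show (0:ℝ) < φm a - (γ a + (Real.exp 1)⁻¹) by linarith)
      refine Set.mem_iUnion.2 ⟨k, ?_⟩
      simp only [Set.mem_setOf_eq]
      rw [one_div] at hk
      push_cast at hk ⊢
      linarith
    have hU : μ (⋃ k : ℕ, {a | γ a + (Real.exp 1)⁻¹ + ((k : ℝ) + 1)⁻¹ ≤ φm a}) ≠ 0 := by
      intro h0
      exact hD (measure_mono_null hsub h0)
    obtain ⟨k, hk⟩ : ∃ k : ℕ, μ {a | γ a + (Real.exp 1)⁻¹ + ((k : ℝ) + 1)⁻¹ ≤ φm a} ≠ 0 := by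
      by_contra hall
      push_neg at hall
      exact hU (measure_iUnion_null fun k => hall k)
    set c : ℝ := ((k : ℝ) + 1)⁻¹ with hc
    have hcpos : 0 < c := by positivity
    set Dk : Set E := {a | γ a + (Real.exp 1)⁻¹ + c ≤ φm a} with hDk
    have hDkm : MeasurableSet Dk :=
      measurableSet_le ((hγm.measurable.add_const _).add_const _) hφmm
    -- remove the null set where γ ≠ f log f
    obtain ⟨N, hNsub, hNm, hNnull⟩ :=
      exists_measurable_superset_of_null (ae_iff.1 hγae)
    set Ek : Set E := Dk \ N with hEk
    have hEkm : MeasurableSet Ek := hDkm.diff hNm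
    have hEkpos : μ Ek ≠ 0 := by
      rw [hEk, measure_diff_null hNnull]; exact hk
    -- pointwise analysis on Ek
    have hpt : ∀ a ∈ Ek, m a - c / (1 + Real.log (m a)) ≥ f a ∧ 1 < m a := by
      intro a ha
      obtain ⟨haD, haN⟩ := ha
      have hfeq : f a * Real.log (f a) = γ a := by
        by_contra hne
        exact haN (hNsub hne)
      have hge : -(Real.exp 1)⁻¹ ≤ γ a := hfeq ▸ xlogx_ge (f a) (hf0 a)
      have hMax : γ a + (Real.exp 1)⁻¹ + c ≤ φm a := haD
      have hφpos : 0 < m a * Real.log (m a) := by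
        rcases le_or_gt (m a * Real.log (m a)) 0 with h | h
        · have : φm a = 0 := max_eq_right h
          rw [this] at hMax; linarith
        · exact h
      have hm1a : 1 < m a := xlogx_pos_gt_one (hm0 a) hφpos
      have hφeq : φm a = m a * Real.log (m a) := max_eq_left hφpos.le
      have hgap : f a * Real.log (f a) + c ≤ m a * Real.log (m a) := by
        rw [hfeq]; rw [hφeq] at hMax
        have hepos : (0:ℝ) < (Real.exp 1)⁻¹ := by positivity
        linarith
      have hfm : f a ≤ m a := by
        by_contra hgt
        push_neg at hgt
        have := xlogx_mono (le_of_lt hm1a) hgt.le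
        linarith
      have hlogpos : 0 < 1 + Real.log (m a) := by
        have := Real.log_pos hm1a; linarith
      have := xlogx_gap (hf0 a) hfm hm1a.le
      constructor
      · rw [ge_iff_le, le_sub_iff_add_le, add_comm, ← le_sub_iff_add_le,
          div_le_iff₀ hlogpos]
        nlinarith
      · exact hm1a
    set θ : E → ℝ := fun a => m a - c / (1 + Real.log (m a)) with hθ
    have hθm : Measurable θ :=
      hmm.sub (measurable_const.div ((Real.measurable_log.comp hmm).const_add 1))
    -- lintegral contradiction
    have e1 : ∫⁻ a in Ek, ENNReal.ofReal (f a) ∂μ = ∫⁻ a in Ek, ENNReal.ofReal (m a) ∂μ :=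
      hfsets Ek hEkm
    have e2 : ∫⁻ a in Ek, ENNReal.ofReal (f a) ∂μ ≤ ∫⁻ a in Ek, ENNReal.ofReal (θ a) ∂μ := by
      refine lintegral_mono_ae ((ae_restrict_iff' hEkm).2 (ae_of_all _ fun a ha => ?_))
      exact ENNReal.ofReal_le_ofReal (hpt a ha).1
    have hθle : ∫⁻ a in Ek, ENNReal.ofReal (θ a) ∂μ ≠ ⊤ := by
      refine ne_of_lt (lt_of_le_of_lt ?_ (lt_of_le_of_lt (le_of_eq hmass) ENNReal.one_lt_top))
      calc ∫⁻ a in Ek, ENNReal.ofReal (θ a) ∂μ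
          ≤ ∫⁻ a in Ek, ENNReal.ofReal (m a) ∂μ := by
            refine lintegral_mono_ae ((ae_restrict_iff' hEkm).2 (ae_of_all _ fun a ha => ?_))
            refine ENNReal.ofReal_le_ofReal ?_
            have h1 := (hpt a ha).2
            have hlogpos : 0 < 1 + Real.log (m a) := by
              have := Real.log_pos h1; linarith
            have : 0 < c / (1 + Real.log (m a)) := div_pos hcpos hlogpos
            simp only [hθ]; linarith
        _ ≤ ∫⁻ a, ENNReal.ofReal (m a) ∂μ := setLIntegral_le_lintegral _ _
    have e3 : ∫⁻ a in Ek, ENNReal.ofReal (θ a) ∂μ < ∫⁻ a in Ek, ENNReal.ofReal (m a) ∂μ := by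
      refine lintegral_strict_mono ?_ (hmm.ennreal_ofReal.aemeasurable.restrict) hθle ?_
      · rw [Ne, Measure.restrict_eq_zero]; exact hEkpos
      · refine (ae_restrict_iff' hEkm).2 (ae_of_all _ fun a ha => ?_)
        have h1 := (hpt a ha).2
        have hlogpos : 0 < 1 + Real.log (m a) := by
          have := Real.log_pos h1; linarith
        refine (ENNReal.ofReal_lt_ofReal_iff (by linarith)).2 ?_
        have : 0 < c / (1 + Real.log (m a)) := div_pos hcpos hlogpos
        simp only [hθ]; linarith
    exact lt_irrefl _ ((e1 ▸ e2).trans_lt e3)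
  -- conclude
  refine ⟨m, hmm, hm0, hνm, hm_int, hm1, ?_⟩
  have hγe : Integrable (fun a => γ a + (Real.exp 1)⁻¹) μ := hγint.add (integrable_const _)
  have hmax_int : Integrable (fun a => max (m a * Real.log (m a)) 0) μ := by
    refine hγe.mono' ((hmm.mul (Real.measurable_log.comp hmm)).max measurable_const).aestronglyMeasurable ?_
    filter_upwards [hkey] with a ha
    rw [Real.norm_eq_abs, abs_of_nonneg (le_max_right _ _)]
    exact ha
  refine ⟨hmax_int, ?_⟩
  have hI := integral_mono_ae hmax_int hγe hkey
  rw [integral_add hγint (integrable_const _), integral_const] at hI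
  rw [integral_congr_ae hγae]
  simpa using hI


section MainProof

set_option maxHeartbeats 2000000 in
theorem propagated_mixing_time_estimate
    (F : Framework E) (x : E) (lam : ℝ) (hlam : 0 < lam) (hgap : HasSpectralGap F lam)
    (ε : ℝ) (hε : ε ∈ Set.Ioo (0 : ℝ) 1) (t : ℝ) (ht : 0 < t)
    (ft : E → ℝ) (hft : ∀ a, 0 ≤ ft a)
    (hdens : (F.κ t) x = F.μ.withDensity fun a => ENNReal.ofReal (ft a))
    (hint : Integrable (fun a => ft a * Real.log (ft a)) F.μ) :
    tmix F x ε ≤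
      ENNReal.ofReal (t + (1 + ∫ a, ft a * Real.log (ft a) ∂F.μ) / (lam * ε)) := by
  haveI := F.isProb
  haveI := F.isMarkov t
  obtain ⟨hε0, hε1⟩ := hε
  set Ent := ∫ a, ft a * Real.log (ft a) ∂F.μ with hEntdef
  obtain ⟨m, hmm, hm0, hνm, hm_int, hm1, hmax_int, hmax_le⟩ :=
    density_entropy_bound ft hft hdens hint
  -- numeric setup
  have hEnt_lb : -(Real.exp 1)⁻¹ ≤ Ent := by
    have hpt : ∀ a, -(Real.exp 1)⁻¹ ≤ ft a * Real.log (ft a) := fun a => xlogx_ge _ (hft a)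
    calc -(Real.exp 1)⁻¹ = ∫ _, -(Real.exp 1)⁻¹ ∂F.μ := by simp
      _ ≤ Ent := integral_mono (integrable_const _) hint hpt
  have he2 : (2:ℝ) < Real.exp 1 := by
    have := Real.exp_one_gt_d9; linarith
  have hepos : (0:ℝ) < (Real.exp 1)⁻¹ := by positivity
  have heinv : (Real.exp 1)⁻¹ < 1/2 := by
    rw [inv_lt_comm₀ (by positivity) (by norm_num)]
    simpa using he2
  have hlog : -Real.log ε ≤ 1/ε * (Real.exp 1)⁻¹ := by
    have h := log_le_div_e (show (0:ℝ) < 1/ε by positivity)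
    rw [Real.log_div one_ne_zero (ne_of_gt hε0), Real.log_one, zero_sub, div_eq_mul_inv] at h
    linarith
  have h1E : 0 < 1 + Ent := by linarith
  set s' := (1 + Ent) / (lam * ε) with hs'def
  have hs'0 : 0 ≤ s' := by positivity
  have hlam' : lam ≠ 0 := ne_of_gt hlam
  have hε' : ε ≠ 0 := ne_of_gt hε0
  have hls : lam * s' = (1 + Ent) / ε := by
    rw [hs'def]
    field_simp
  set L := 2 * ((1 + Ent)/ε + Real.log ε) with hLdef
  have hLpos : 0 < L := by
    have h1 : (1 - (Real.exp 1)⁻¹) / ε ≤ (1 + Ent) / ε :=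
      (div_le_div_iff_of_pos_right hε0).2 (by linarith)
    have h4 : (1 - (Real.exp 1)⁻¹)/ε - 1/ε * (Real.exp 1)⁻¹ = (1 - 2*(Real.exp 1)⁻¹)/ε := by
      field_simp; ring
    have h5 : 0 < (1 - 2*(Real.exp 1)⁻¹)/ε := by
      apply div_pos (by linarith) hε0
    rw [hLdef]
    nlinarith
  set K := Real.exp L with hKdef
  have hK1 : 1 < K := by
    rw [hKdef, show (1:ℝ) = Real.exp 0 from (Real.exp_zero).symm]
    exact Real.exp_lt_exp.2 hLpos
  have hlogK : Real.log K = L := by rw [hKdef, Real.log_exp]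
  -- truncation
  set M : E → ℝ := fun a => min (m a) K with hMdef
  have hMm : Measurable M := hmm.min measurable_const
  have hM0 : ∀ a, 0 ≤ M a := fun a => le_min (hm0 a) (by linarith)
  have hMK : ∀ a, M a ≤ K := fun a => min_le_right _ _
  have hMle : ∀ a, M a ≤ m a := fun a => min_le_left _ _
  have hM_int : Integrable M F.μ := by
    refine hm_int.mono hMm.aestronglyMeasurable (ae_of_all _ fun a => ?_)
    rw [Real.norm_eq_abs, Real.norm_eq_abs, abs_of_nonneg (hM0 a), abs_of_nonneg (hm0 a)]
    exact hMle a
  set c₀ := ∫ a, M a ∂F.μ with hc₀def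
  have hc₀0 : 0 ≤ c₀ := integral_nonneg hM0
  have hc₀1 : c₀ ≤ 1 := by
    rw [hc₀def, ← hm1]
    exact integral_mono hM_int hm_int hMle
  set τ := 1 - c₀ with hτdef
  have hτ0 : 0 ≤ τ := by rw [hτdef]; linarith
  -- tail bound
  have hτε : τ ≤ ε/2 := by
    have hpt : ∀ a, (m a - M a) * L ≤ max (m a * Real.log (m a)) 0 := by
      intro a
      rcases le_or_gt (m a) K with hc | hc
      · have : M a = m a := min_eq_left hc
        rw [this]
        simp [le_max_right]
      · have hMa : M a = K := min_eq_right hc.le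
        have h1 : 1 < m a := lt_trans hK1 hc
        have h2 : m a * L ≤ m a * Real.log (m a) := by
          rw [← hlogK]
          exact mul_le_mul_of_nonneg_left (Real.log_le_log (by positivity) hc.le) (hm0 a)
        have h3 : (m a - M a) * L ≤ m a * L := by
          rw [hMa]
          nlinarith
        exact le_trans (le_trans h3 h2) (le_max_left _ _)
    have hInt1 : Integrable (fun a => (m a - M a) * L) F.μ := (hm_int.sub hM_int).mul_const L
    have hI := integral_mono hInt1 hmax_int hpt
    rw [integral_mul_const, integral_sub hm_int hM_int, hm1] at hI
    have h2 : τ * L ≤ Ent + (Real.exp 1)⁻¹ := by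
      rw [hτdef]
      exact le_trans hI hmax_le
    have h3 : Ent + (Real.exp 1)⁻¹ ≤ (ε/2)*L := by
      have hL2 : (ε/2)*L = (1+Ent) + ε * Real.log ε := by
        rw [hLdef]; field_simp
      have h4 : -(ε * Real.log ε) ≤ (Real.exp 1)⁻¹ := by
        have h5 := mul_le_mul_of_nonneg_left hlog hε0.le
        have h6 : ε * (1/ε * (Real.exp 1)⁻¹) = (Real.exp 1)⁻¹ := by field_simp
        nlinarith
      rw [hL2]
      linarith
    nlinarith
  -- the mean-zero truncated function and its propagation
  set g : E → ℝ := fun a => M a - c₀ with hgdef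
  have hgm : Measurable g := hMm.sub measurable_const
  have hg_lb : ∀ a, -1 ≤ g a := fun a => by
    have := hM0 a; rw [hgdef]; simp only; linarith
  have hg_ub : ∀ a, g a ≤ K := fun a => by
    have := hMK a; rw [hgdef]; simp only; linarith
  have hg_abs : ∀ a, |g a| ≤ K := fun a => by
    rw [abs_le]; exact ⟨by linarith [hg_lb a], hg_ub a⟩
  have hg_int : Integrable g F.μ := hM_int.sub (integrable_const c₀)
  have hg0 : ∫ a, g a ∂F.μ = 0 := by
    rw [hgdef]
    simp only
    rw [integral_sub hM_int (integrable_const c₀), integral_const]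
    simp [← hc₀def]
  have hgsq_int : Integrable (fun a => g a ^ 2) F.μ := by
    refine (integrable_const (K^2)).mono' (hgm.pow_const 2).aestronglyMeasurable
      (ae_of_all _ fun a => ?_)
    rw [Real.norm_eq_abs, abs_of_nonneg (sq_nonneg _)]
    nlinarith [hg_abs a, abs_nonneg (g a), sq_abs (g a)]
  have hMsq_int : Integrable (fun a => M a ^ 2) F.μ := by
    refine (integrable_const (K^2)).mono' (hMm.pow_const 2).aestronglyMeasurable
      (ae_of_all _ fun a => ?_)
    rw [Real.norm_eq_abs, abs_of_nonneg (sq_nonneg _)]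
    nlinarith [hM0 a, hMK a]
  have hgsq : ∫ a, g a ^ 2 ∂F.μ ≤ K := by
    have e1 : ∫ a, g a ^ 2 ∂F.μ = ∫ a, M a ^ 2 ∂F.μ - c₀^2 := by
      have ept : ∀ a, g a ^ 2 = M a ^ 2 - 2*c₀ * M a + c₀^2 := by
        intro a; rw [hgdef]; ring
      have i1 : Integrable (fun a => M a ^ 2 - 2*c₀ * M a) F.μ :=
        hMsq_int.sub (hM_int.const_mul (2*c₀))
      rw [integral_congr_ae (ae_of_all _ ept), integral_add i1 (integrable_const _),
        integral_sub hMsq_int (hM_int.const_mul (2*c₀)), integral_const_mul,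
        integral_const, ← hc₀def]
      simp
      ring
    have e2 : ∫ a, M a ^ 2 ∂F.μ ≤ K * c₀ := by
      rw [hc₀def, ← integral_const_mul]
      refine integral_mono hMsq_int (hM_int.const_mul K) fun a => ?_
      nlinarith [hM0 a, hMK a]
    rw [e1]
    nlinarith
  have hmem : MemLp g 2 F.μ :=
    MemLp.of_bound hgm.aestronglyMeasurable K (ae_of_all _ fun a => by
      rw [Real.norm_eq_abs]; exact hg_abs a)
  have hgapap := hgap g hmem hg0 s' hs'0
  set h : E → ℝ := Pop F.κ s' g with hhdef
  -- the shifted nonnegative function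
  set G : E → ℝ := fun a => g a + 1 with hGdef
  have hGm : Measurable G := hgm.add measurable_const
  have hG0 : ∀ a, 0 ≤ G a := fun a => by
    have := hg_lb a; rw [hGdef]; simp only; linarith
  have hGC : ∀ a, G a ≤ K + 1 := fun a => by
    have := hg_ub a; rw [hGdef]; simp only; linarith
  have hGrel : ∀ z, Pop F.κ s' G z = h z + 1 := by
    intro z
    haveI := F.isMarkov s'
    have hgi : Integrable g (F.κ s' z) := by
      refine (integrable_const K).mono' hgm.aestronglyMeasurable (ae_of_all _ fun a => ?_)
      rw [Real.norm_eq_abs]; exact hg_abs a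
    rw [hhdef]
    simp only [Pop, hGdef]
    rw [integral_add hgi (integrable_const 1), integral_const]
    simp
  have hPopG := F.Pop_bounds (s := s') hGm hG0 hGC
  have hhm : Measurable h := by
    have : h = fun z => Pop F.κ s' G z - 1 := funext fun z => by rw [hGrel z]; ring
    rw [this]
    exact (F.Pop_nonneg_measurable hGm hG0).sub measurable_const
  have hh_abs : ∀ z, |h z| ≤ K := by
    intro z
    have h1 := (hPopG z).1
    have h2 := (hPopG z).2
    have h3 := hGrel z
    rw [abs_le]
    constructor <;> nlinarith
  have hh_int : Integrable h F.μ := by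
    refine (integrable_const K).mono' hhm.aestronglyMeasurable (ae_of_all _ fun z => ?_)
    rw [Real.norm_eq_abs]; exact hh_abs z
  have habs_int : Integrable (fun z => |h z|) F.μ := hh_int.abs
  have hh0 : ∫ z, h z ∂F.μ = 0 := by
    have e1 := F.rself hs'0 MeasurableSet.univ hGm hG0 hGC
    have e2 : ∀ y, G y * (F.κ s' y Set.univ).toReal = G y := by
      intro y
      haveI := F.isMarkov s'
      rw [measure_univ]
      simp
    rw [integral_congr_ae (ae_of_all _ e2), Measure.restrict_univ] at e1
    have e3 : ∫ y, G y ∂F.μ = 1 := by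
      rw [hGdef]
      simp only
      rw [integral_add hg_int (integrable_const 1), hg0, integral_const]
      simp
    have e4 : ∫ z, Pop F.κ s' G z ∂F.μ = ∫ z, (h z + 1) ∂F.μ :=
      integral_congr_ae (ae_of_all _ hGrel)
    rw [e3, e4, integral_add hh_int (integrable_const 1), integral_const] at e1
    simp at e1
    linarith
  -- L¹ bound on h from the spectral gap
  have hL1 : ∫ z, |h z| ∂F.μ ≤ ε := by
    have e1 : ENNReal.ofReal (∫ z, |h z| ∂F.μ) = eLpNorm h 1 F.μ := by
      rw [ofReal_integral_eq_lintegral_ofReal habs_int (ae_of_all _ fun z => abs_nonneg _),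
        eLpNorm_one_eq_lintegral_enorm]
      refine lintegral_congr fun z => ?_
      rw [← ofReal_norm, Real.norm_eq_abs]
    have e2 : eLpNorm h 1 F.μ ≤ eLpNorm h 2 F.μ :=
      eLpNorm_le_eLpNorm_of_exponent_le (by norm_num) hhm.aestronglyMeasurable
    have e3 : eLpNorm g 2 F.μ ≤ ENNReal.ofReal (Real.exp (L/2)) := by
      rw [eLpNorm_eq_lintegral_rpow_enorm_toReal (by norm_num) (by norm_num)]
      have htr : (2:ℝ≥0∞).toReal = 2 := by norm_num
      rw [htr]
      have eI : ∫⁻ a, ‖g a‖ₑ ^ (2:ℝ) ∂F.μ = ENNReal.ofReal (∫ a, g a ^ 2 ∂F.μ) := by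
        rw [ofReal_integral_eq_lintegral_ofReal hgsq_int (ae_of_all _ fun a => sq_nonneg _)]
        refine lintegral_congr fun a => ?_
        rw [← ofReal_norm, Real.norm_eq_abs,
          ENNReal.ofReal_rpow_of_nonneg (abs_nonneg _) (by norm_num : (0:ℝ) ≤ 2)]
        congr 1
        rw [show ((2:ℝ)) = ((2:ℕ):ℝ) by norm_num, Real.rpow_natCast, sq_abs]
      rw [eI]
      calc ENNReal.ofReal (∫ a, g a ^ 2 ∂F.μ) ^ (1/(2:ℝ))
          ≤ ENNReal.ofReal K ^ (1/(2:ℝ)) := by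
            exact ENNReal.rpow_le_rpow (ENNReal.ofReal_le_ofReal hgsq) (by norm_num)
        _ = ENNReal.ofReal (K ^ (1/(2:ℝ))) := ENNReal.ofReal_rpow_of_pos (by linarith)
        _ = ENNReal.ofReal (Real.exp (L/2)) := by
            congr 1
            rw [hKdef, ← Real.exp_log (x := Real.exp L ^ (1/(2:ℝ))) (by positivity),
              Real.log_rpow (Real.exp_pos L), Real.log_exp]
            congr 1
            ring
    have e4 : eLpNorm h 2 F.μ ≤ ENNReal.ofReal (Real.exp (-lam*s')) * ENNReal.ofReal (Real.exp (L/2)) := by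
      rw [hhdef]
      exact le_trans hgapap (mul_le_mul_right e3 _)
    have e5 : ENNReal.ofReal (Real.exp (-lam*s')) * ENNReal.ofReal (Real.exp (L/2))
        = ENNReal.ofReal ε := by
      rw [← ENNReal.ofReal_mul (Real.exp_pos _).le, ← Real.exp_add]
      congr 1
      have harg : -(lam * s') + L/2 = Real.log ε := by
        rw [hls, hLdef]
        ring
      rw [neg_mul, harg, Real.exp_log hε0]
    have := le_trans (le_trans (le_of_eq e1) e2) (le_trans e4 (le_of_eq e5))
    exact (ENNReal.ofReal_le_ofReal_iff hε0.le).1 this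
  -- the time t + s' and its law
  have ht'0 : 0 < t + s' := by linarith
  haveI := F.isMarkov (t + s')
  haveI := F.isMarkov s'
  set ν' := F.κ (t + s') x with hν'def
  have hcomp : F.κ (t + s') = (F.κ s').comp (F.κ t) := F.semigroup t s' ht.le hs'0
  -- representations of ν' A and μ A
  have hν'A : ∀ A : Set E, MeasurableSet A →
      (ν' A).toReal = ∫ y, m y * (F.κ s' y A).toReal ∂F.μ := by
    intro A hA
    have e1 : ν' A = ∫⁻ y, F.κ s' y A ∂(F.κ t x) := by
      rw [hν'def, hcomp, Kernel.comp_apply, Measure.bind_apply hA (Kernel.measurable _).aemeasurable]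
    have e2 : ∫⁻ y, F.κ s' y A ∂(F.κ t x)
        = ∫⁻ y, ENNReal.ofReal (m y) * F.κ s' y A ∂F.μ := by
      rw [hνm, lintegral_withDensity_eq_lintegral_mul _ hmm.ennreal_ofReal
        (Kernel.measurable_coe _ hA)]
      rfl
    have e3 : (∫⁻ y, ENNReal.ofReal (m y) * F.κ s' y A ∂F.μ).toReal
        = ∫ y, m y * (F.κ s' y A).toReal ∂F.μ := by
      have hit := integral_toReal (μ := F.μ)
        (f := fun y => ENNReal.ofReal (m y) * F.κ s' y A)
        ((hmm.ennreal_ofReal.mul (Kernel.measurable_coe _ hA)).aemeasurable)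
        (ae_of_all _ fun y => ENNReal.mul_lt_top ENNReal.ofReal_lt_top (measure_lt_top _ _))
      have hit' : ∫ y, (ENNReal.ofReal (m y) * F.κ s' y A).toReal ∂F.μ
          = (∫⁻ y, ENNReal.ofReal (m y) * F.κ s' y A ∂F.μ).toReal := hit
      rw [← hit']
      refine integral_congr_ae (ae_of_all _ fun y => ?_)
      simp only [ENNReal.toReal_mul, ENNReal.toReal_ofReal (hm0 y)]
    rw [e1, e2]
    exact e3
  have hμA : ∀ A : Set E, MeasurableSet A →
      (F.μ A).toReal = ∫ y, (F.κ s' y A).toReal ∂F.μ := fun A hA => (F.rinv hs'0 hA).symm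
  -- the one-sided estimate
  have hmain : ∀ A : Set E, MeasurableSet A → (F.μ A).toReal - (ν' A).toReal ≤ ε := by
    intro A hA
    set q : E → ℝ := fun y => (F.κ s' y A).toReal with hqdef
    have hqm : Measurable q := (Kernel.measurable_coe _ hA).ennreal_toReal
    have hq0 : ∀ y, 0 ≤ q y := fun y => ENNReal.toReal_nonneg
    have hq1 : ∀ y, q y ≤ 1 := by
      intro y
      rw [hqdef]
      simp only
      rw [show (1:ℝ) = ((1:ℝ≥0∞)).toReal by simp]
      exact ENNReal.toReal_mono ENNReal.one_ne_top prob_le_one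
    have hq_int : Integrable q F.μ := by
      refine (integrable_const 1).mono' hqm.aestronglyMeasurable (ae_of_all _ fun y => ?_)
      rw [Real.norm_eq_abs, abs_of_nonneg (hq0 y)]; exact hq1 y
    have hqint_eq : ∫ y, q y ∂F.μ = (F.μ A).toReal := F.rinv hs'0 hA
    -- integrabilities
    have hint_mq : Integrable (fun y => m y * q y) F.μ := by
      refine hm_int.mono (hmm.mul hqm).aestronglyMeasurable (ae_of_all _ fun y => ?_)
      simp only [Real.norm_eq_abs, abs_mul, abs_of_nonneg (hm0 y), abs_of_nonneg (hq0 y)]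
      exact mul_le_of_le_one_right (hm0 y) (hq1 y)
    have hint_gq : Integrable (fun y => g y * q y) F.μ := by
      refine (integrable_const K).mono' (hgm.mul hqm).aestronglyMeasurable
        (ae_of_all _ fun y => ?_)
      rw [Real.norm_eq_abs, abs_mul]
      calc |g y| * |q y| ≤ K * 1 := by
            refine mul_le_mul (hg_abs y) ?_ (abs_nonneg _) (by linarith)
            rw [abs_of_nonneg (hq0 y)]; exact hq1 y
        _ = K := mul_one K
    have hint_Mmq : Integrable (fun y => (M y - m y) * q y) F.μ := by
      refine hm_int.mono ((hMm.sub hmm).mul hqm).aestronglyMeasurable (ae_of_all _ fun y => ?_)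
      rw [Real.norm_eq_abs, Real.norm_eq_abs, abs_mul, abs_of_nonneg (hm0 y)]
      have h1 : |M y - m y| ≤ m y := by
        rw [abs_le]; constructor
        · have := hM0 y; linarith
        · have := hMle y; have := hm0 y; linarith
      calc |M y - m y| * |q y| ≤ m y * 1 := by
            refine mul_le_mul h1 ?_ (abs_nonneg _) (hm0 y)
            rw [abs_of_nonneg (hq0 y)]; exact hq1 y
        _ = m y := mul_one _
    -- self-adjointness: ∫ g q = ∫_A h
    have hGq : ∫ y, G y * q y ∂F.μ = ∫ z in A, Pop F.κ s' G z ∂F.μ :=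
      F.rself hs'0 hA hGm hG0 hGC
    have hterm1 : ∫ y, g y * q y ∂F.μ = ∫ z in A, h z ∂F.μ := by
      have l : ∫ y, G y * q y ∂F.μ = ∫ y, g y * q y ∂F.μ + ∫ y, q y ∂F.μ := by
        rw [← integral_add hint_gq hq_int]
        refine integral_congr_ae (ae_of_all _ fun y => ?_)
        rw [hGdef]; ring
      have r : ∫ z in A, Pop F.κ s' G z ∂F.μ = ∫ z in A, h z ∂F.μ + (F.μ A).toReal := by
        rw [integral_congr_ae (ae_of_all _ fun z => (hGrel z)) ,
          integral_add (hh_int.integrableOn) (integrable_const 1), integral_const]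
        simp [Measure.restrict_apply_univ, Measure.real]
      rw [l, r, hqint_eq] at hGq
      linarith
    -- bound -∫_A h
    have hb1 : - ∫ z in A, h z ∂F.μ ≤ ε/2 := by
      have hp : ∀ z, -h z ≤ (|h z| - h z)/2 := by
        intro z
        rcases le_or_gt 0 (h z) with hz | hz
        · rw [abs_of_nonneg hz]; linarith
        · rw [abs_of_neg hz]; linarith
      have hint_p : Integrable (fun z => (|h z| - h z)/2) F.μ := (habs_int.sub hh_int).div_const 2
      have i1 : ∫ z in A, (-h z) ∂F.μ ≤ ∫ z in A, (|h z| - h z)/2 ∂F.μ :=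
        integral_mono (hh_int.neg.integrableOn) (hint_p.integrableOn) hp
      have i2 : ∫ z in A, (|h z| - h z)/2 ∂F.μ ≤ ∫ z, (|h z| - h z)/2 ∂F.μ := by
        refine setIntegral_le_integral hint_p (ae_of_all _ fun z => ?_)
        have h1 := le_abs_self (h z)
        simp only [Pi.zero_apply]
        linarith
      have i3 : ∫ z, (|h z| - h z)/2 ∂F.μ = (∫ z, |h z| ∂F.μ)/2 := by
        rw [integral_div, integral_sub habs_int hh_int, hh0]
        ring
      rw [← integral_neg] at *
      calc ∫ z in A, (-h z) ∂F.μ ≤ (∫ z, |h z| ∂F.μ)/2 := by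
            rw [← i3]; exact le_trans i1 i2
        _ ≤ ε/2 := by linarith
    -- combine
    rw [hμA A hA, hν'A A hA]
    have inn : Integrable (fun y => -(g y * q y)) F.μ := hint_gq.neg
    have ia : Integrable (fun y => -(g y * q y) + (1 - c₀) * q y) F.μ :=
      inn.add (hq_int.const_mul _)
    have hsplit : ∫ y, q y ∂F.μ - ∫ y, m y * q y ∂F.μ
        = (- ∫ y, g y * q y ∂F.μ) + (1 - c₀) * (∫ y, q y ∂F.μ)
          + ∫ y, (M y - m y) * q y ∂F.μ := by
      have hcomb : ∫ y, q y ∂F.μ - ∫ y, m y * q y ∂F.μ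
          = ∫ y, (-(g y * q y) + (1 - c₀) * q y + (M y - m y) * q y) ∂F.μ := by
        rw [← integral_sub hq_int hint_mq]
        refine integral_congr_ae (ae_of_all _ fun y => ?_)
        simp only [hgdef]
        ring
      rw [hcomb, integral_add ia hint_Mmq, integral_add inn (hq_int.const_mul _),
        integral_neg, integral_const_mul]
    have hb2 : (1 - c₀) * (∫ y, q y ∂F.μ) ≤ τ := by
      have hq_le : ∫ y, q y ∂F.μ ≤ 1 := by
        calc ∫ y, q y ∂F.μ ≤ ∫ _, (1:ℝ) ∂F.μ := integral_mono hq_int (integrable_const 1) hq1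
          _ = 1 := by simp
      have hq_nn : 0 ≤ ∫ y, q y ∂F.μ := integral_nonneg hq0
      rw [hτdef]
      nlinarith
    have hb3 : ∫ y, (M y - m y) * q y ∂F.μ ≤ 0 := by
      refine integral_nonpos fun y => ?_
      have := hMle y
      exact mul_nonpos_of_nonpos_of_nonneg (by linarith) (hq0 y)
    rw [hsplit]
    rw [hterm1] at *
    linarith
  -- total variation bound
  have hcompl1 : ∀ (P : Measure E) [IsProbabilityMeasure P] (A : Set E), MeasurableSet A →
      (P A).toReal + (P Aᶜ).toReal = 1 := by
    intro P hP A hA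
    rw [← ENNReal.toReal_add (measure_ne_top _ _) (measure_ne_top _ _),
      measure_add_measure_compl hA]
    simp
  haveI : IsProbabilityMeasure ν' := by rw [hν'def]; infer_instance
  have htv : tvDist (F.κ (t + s') x) F.μ ≤ ε := by
    rw [tvDist]
    haveI : Nonempty {A : Set E // MeasurableSet A} := ⟨⟨∅, MeasurableSet.empty⟩⟩
    refine ciSup_le fun A => ?_
    rw [abs_le]
    have hm1' := hmain A.1 A.2
    have hm2' := hmain A.1ᶜ A.2.compl
    have hc1 := hcompl1 ν' A.1 A.2
    have hc2 := hcompl1 F.μ A.1 A.2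
    rw [← hν'def]
    constructor
    · linarith
    · linarith
  -- conclude
  calc tmix F x ε ≤ ENNReal.ofReal (t + s') := by
        refine iInf_le_of_le (t + s') (iInf_le_of_le ⟨ht'0, htv⟩ le_rfl)
    _ = ENNReal.ofReal (t + (1 + Ent) / (lam * ε)) := by rw [hs'def]

end MainProof
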